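/- arXiv:2604.19177 — 3 statements merged into one kernel-verified Lean document; each statement's English description precedes it below -/
import Mathlib

section
/- Let (Ω, ℱ, μ) be a standard Borel probability space, let X, Y : Ω → (0,1] be random variables, Z : Ω → ℝ^d measurable, and let k1, k2 ≥ 1 be integers. Then X ⊥_{k1,k2} Y | Z holds if and only if for every I ∈ 𝓘_{k1−1} and every J ∈ 𝓙_{k2−1}, μ-almost everywhere: μ[1_{X∈I^left}·1_{Y∈J^left} | σ(Z)] · μ[1_{X∈I^right}·1_{Y∈J^right} | σ(Z)] = μ[1_{X∈I^left}·1_{Y∈J^right} | σ(Z)] · μ[1_{X∈I^right}·1_{Y∈J^left} | σ(Z)]. (This cross-product identity is the almost-sure vanishing of the conditional log odds ratio θ(I, J, Z) of the window I×J.) -/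
open MeasureTheory

/-- The level-`l` dyadic interval `((j)·2^{−l}, (j+1)·2^{−l}]` of `(0,1]` (for `j < 2^l`). -/
def dyad (l j : ℕ) : Set ℝ := Set.Ioc ((j : ℝ) / 2 ^ l) (((j : ℝ) + 1) / 2 ^ l)

/-- `(k1,k2)`-conditional independence of `X` and `Y` given `Z`: for every dyadic interval
`I` in the tree `𝓘_{k1}` (any level `l1 ≤ k1`) and `J` in `𝓙_{k2}`,
`μ[1_{X∈I}·1_{Y∈J} | σ(Z)] = μ[1_{X∈I} | σ(Z)]·μ[1_{Y∈J} | σ(Z)]` a.e. -/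
def kCondIndep {Ω : Type*} [MeasurableSpace Ω] (μ : Measure Ω)
    {E : Type*} [MeasurableSpace E]
    (X Y : Ω → ℝ) (Z : Ω → E) (k1 k2 : ℕ) : Prop :=
  ∀ l1 ≤ k1, ∀ l2 ≤ k2, ∀ j1 < 2 ^ l1, ∀ j2 < 2 ^ l2,
    μ[fun ω => (dyad l1 j1).indicator (fun _ => (1 : ℝ)) (X ω) *
        (dyad l2 j2).indicator (fun _ => (1 : ℝ)) (Y ω) |
      MeasurableSpace.comap Z inferInstance]
    =ᵐ[μ]
    (μ[fun ω => (dyad l1 j1).indicator (fun _ => (1 : ℝ)) (X ω) |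
        MeasurableSpace.comap Z inferInstance]) *
      (μ[fun ω => (dyad l2 j2).indicator (fun _ => (1 : ℝ)) (Y ω) |
        MeasurableSpace.comap Z inferInstance])

namespace DyadicORAux

/-- real-valued indicator of a set -/
noncomputable def ind {Ω : Type*} (A : Set Ω) : Ω → ℝ := A.indicator (fun _ => 1)

section
variable {Ω : Type*} {m0 : MeasurableSpace Ω} {μ : Measure Ω} [IsFiniteMeasure μ]
  {m : MeasurableSpace Ω}

lemma ind_int {A : Set Ω} (hA : MeasurableSet[m0] A) : Integrable (ind A) μ :=
  (integrable_const (1 : ℝ)).indicator hA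

lemma ind_union {A B : Set Ω} (h : Disjoint A B) : ind (A ∪ B) = ind A + ind B := by
  funext ω
  rw [ind, Set.indicator_union_of_disjoint h]
  rfl

lemma ce_union {A B : Set Ω} (hA : MeasurableSet[m0] A) (hB : MeasurableSet[m0] B)
    (h : Disjoint A B) : μ[ind (A ∪ B)|m] =ᵐ[μ] μ[ind A|m] + μ[ind B|m] := by
  rw [ind_union h]
  exact condExp_add (ind_int hA) (ind_int hB) m

omit [IsFiniteMeasure μ] in
lemma ce_nonneg (A : Set Ω) : (0 : Ω → ℝ) ≤ᵐ[μ] μ[ind A|m] :=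
  condExp_nonneg (Filter.Eventually.of_forall fun ω =>
    Set.indicator_nonneg (fun _ _ => zero_le_one) ω)

lemma ce_mono {A B : Set Ω} (hA : MeasurableSet[m0] A) (hB : MeasurableSet[m0] B) (h : A ⊆ B) :
    μ[ind A|m] ≤ᵐ[μ] μ[ind B|m] :=
  condExp_mono (ind_int hA) (ind_int hB) (Filter.Eventually.of_forall fun ω =>
    Set.indicator_le_indicator_of_subset h (fun _ => zero_le_one) ω)

lemma key_real {a b c d P Q P1 Q1 : ℝ}
    (ha : 0 ≤ a) (hb : 0 ≤ b) (hc : 0 ≤ c) (hd : 0 ≤ d)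
    (hP1 : 0 ≤ P1) (hQ1 : 0 ≤ Q1) (hP1P : P1 ≤ P) (hQ1Q : Q1 ≤ Q)
    (hodds : a * d = b * c) (hs : a + b + c + d = P * Q)
    (hab : a + b = P1 * Q) (hac : a + c = P * Q1) : a = P1 * Q1 := by
  by_cases hPQ : P * Q = 0
  · have h0 : a = 0 := by nlinarith
    rcases mul_eq_zero.1 hPQ with hP | hQ
    · have hP10 : P1 = 0 := le_antisymm (by rw [hP] at hP1P; exact hP1P) hP1
      simp [h0, hP10]
    · have hQ10 : Q1 = 0 := le_antisymm (by rw [hQ] at hQ1Q; exact hQ1Q) hQ1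
      simp [h0, hQ10]
  · refine mul_right_cancel₀ hPQ ?_
    calc a * (P * Q) = a * (a + b + c + d) := by rw [hs]
      _ = (a + b) * (a + c) := by linear_combination hodds
      _ = (P1 * Q) * (P * Q1) := by rw [hab, hac]
      _ = (P1 * Q1) * (P * Q) := by ring

/-- the key step: from the cross-product (odds ratio) identity of a window together with
conditional independence of the three "parent" rectangles, deduce conditional independence
of the corner rectangle. -/
lemma corner {Au Av Bw Bx PA PB : Set Ω}
    (hAu : MeasurableSet[m0] Au) (hAv : MeasurableSet[m0] Av)
    (hBw : MeasurableSet[m0] Bw) (hBx : MeasurableSet[m0] Bx)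
    (hA : Disjoint Au Av) (hB : Disjoint Bw Bx)
    (eA : PA = Au ∪ Av) (eB : PB = Bw ∪ Bx)
    (hodds : μ[ind (Au ∩ Bw)|m] * μ[ind (Av ∩ Bx)|m]
      =ᵐ[μ] μ[ind (Au ∩ Bx)|m] * μ[ind (Av ∩ Bw)|m])
    (hs : μ[ind (PA ∩ PB)|m] =ᵐ[μ] μ[ind PA|m] * μ[ind PB|m])
    (hab : μ[ind (Au ∩ PB)|m] =ᵐ[μ] μ[ind Au|m] * μ[ind PB|m])
    (hac : μ[ind (PA ∩ Bw)|m] =ᵐ[μ] μ[ind PA|m] * μ[ind Bw|m]) :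
    μ[ind (Au ∩ Bw)|m] =ᵐ[μ] μ[ind Au|m] * μ[ind Bw|m] := by
  subst eA eB
  have dj1 : Disjoint (Au ∩ Bw) (Au ∩ Bx) :=
    hB.mono Set.inter_subset_right Set.inter_subset_right
  have dj2 : Disjoint (Av ∩ Bw) (Av ∩ Bx) :=
    hB.mono Set.inter_subset_right Set.inter_subset_right
  have dj3 : Disjoint (Au ∩ Bw) (Av ∩ Bw) :=
    hA.mono Set.inter_subset_left Set.inter_subset_left
  have dj4 : Disjoint (Au ∩ (Bw ∪ Bx)) (Av ∩ (Bw ∪ Bx)) :=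
    hA.mono Set.inter_subset_left Set.inter_subset_left
  have e1 : μ[ind (Au ∩ (Bw ∪ Bx))|m] =ᵐ[μ] μ[ind (Au ∩ Bw)|m] + μ[ind (Au ∩ Bx)|m] := by
    rw [Set.inter_union_distrib_left]
    exact ce_union (hAu.inter hBw) (hAu.inter hBx) dj1
  have e2 : μ[ind (Av ∩ (Bw ∪ Bx))|m] =ᵐ[μ] μ[ind (Av ∩ Bw)|m] + μ[ind (Av ∩ Bx)|m] := by
    rw [Set.inter_union_distrib_left]
    exact ce_union (hAv.inter hBw) (hAv.inter hBx) dj2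
  have e3 : μ[ind ((Au ∪ Av) ∩ Bw)|m] =ᵐ[μ] μ[ind (Au ∩ Bw)|m] + μ[ind (Av ∩ Bw)|m] := by
    rw [Set.union_inter_distrib_right]
    exact ce_union (hAu.inter hBw) (hAv.inter hBw) dj3
  have e4 : μ[ind ((Au ∪ Av) ∩ (Bw ∪ Bx))|m] =ᵐ[μ]
      μ[ind (Au ∩ (Bw ∪ Bx))|m] + μ[ind (Av ∩ (Bw ∪ Bx))|m] := by
    rw [Set.union_inter_distrib_right]
    exact ce_union (hAu.inter (hBw.union hBx)) (hAv.inter (hBw.union hBx)) dj4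
  have hPl : μ[ind Au|m] ≤ᵐ[μ] μ[ind (Au ∪ Av)|m] :=
    ce_mono hAu (hAu.union hAv) Set.subset_union_left
  have hQl : μ[ind Bw|m] ≤ᵐ[μ] μ[ind (Bw ∪ Bx)|m] :=
    ce_mono hBw (hBw.union hBx) Set.subset_union_left
  filter_upwards [hodds, hs, hab, hac, e1, e2, e3, e4, hPl, hQl,
    ce_nonneg (μ := μ) (m := m) (Au ∩ Bw), ce_nonneg (μ := μ) (m := m) (Au ∩ Bx),
    ce_nonneg (μ := μ) (m := m) (Av ∩ Bw), ce_nonneg (μ := μ) (m := m) (Av ∩ Bx),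
    ce_nonneg (μ := μ) (m := m) Au, ce_nonneg (μ := μ) (m := m) Bw]
    with ω godds gs gab gac g1 g2 g3 g4 gPl gQl na nb nc nd nP1 nQ1
  simp only [Pi.mul_apply, Pi.add_apply, Pi.zero_apply] at *
  exact key_real na nb nc nd nP1 nQ1 gPl gQl godds (by linarith) (by linarith) (by linarith)

lemma ae_mul_comm {α : Type*} {m0 : MeasurableSpace α} {μ : Measure α} {f g u v : α → ℝ}
    (h : f * g =ᵐ[μ] u * v) : g * f =ᵐ[μ] v * u := by
  filter_upwards [h] with ω hω
  simp only [Pi.mul_apply] at hω ⊢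
  linear_combination hω

end

lemma dyad_union (l j : ℕ) : dyad l j = dyad (l + 1) (2 * j) ∪ dyad (l + 1) (2 * j + 1) := by
  unfold dyad
  push_cast
  have h1 : ((2 : ℝ) * j) / 2 ^ (l + 1) = (j : ℝ) / 2 ^ l := by
    rw [pow_succ]; field_simp
  have h2 : ((2 : ℝ) * j + 1 + 1) / 2 ^ (l + 1) = ((j : ℝ) + 1) / 2 ^ l := by
    rw [pow_succ]; field_simp; ring
  rw [h1, h2, Set.Ioc_union_Ioc_eq_Ioc]
  · rw [div_le_div_iff₀ (by positivity) (by positivity), pow_succ]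
    nlinarith [pow_pos (by norm_num : (0:ℝ) < 2) l]
  · rw [div_le_div_iff₀ (by positivity) (by positivity), pow_succ]
    nlinarith [pow_pos (by norm_num : (0:ℝ) < 2) l]

lemma dyad_disjoint (l j : ℕ) : Disjoint (dyad (l + 1) (2 * j)) (dyad (l + 1) (2 * j + 1)) := by
  unfold dyad
  have h : ((2 * j : ℕ) : ℝ) + 1 = ((2 * j + 1 : ℕ) : ℝ) := by push_cast; ring
  rw [h]
  exact Set.Ioc_disjoint_Ioc_of_le le_rfl

lemma dyad_zero : dyad 0 0 = Set.Ioc (0 : ℝ) 1 := by simp [dyad]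

end DyadicORAux

open DyadicORAux

/-- for `k1, k2 ≥ 1`, `X ⊥_{k1,k2} Y | Z` holds iff for every window `I × J` with
`I ∈ 𝓘_{k1−1}` and `J ∈ 𝓙_{k2−1}`, the conditional cross-product identity
`μ[1_{X∈I^l}1_{Y∈J^l}|σ(Z)]·μ[1_{X∈I^r}1_{Y∈J^r}|σ(Z)]
  = μ[1_{X∈I^l}1_{Y∈J^r}|σ(Z)]·μ[1_{X∈I^r}1_{Y∈J^l}|σ(Z)]` holds a.e.
(vanishing of the conditional log odds ratio of the window). -/
theorem dyadic_condIndep_iff_windows_odds_ratio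
    {Ω : Type*} [MeasurableSpace Ω] [StandardBorelSpace Ω]
    (μ : Measure Ω) [IsProbabilityMeasure μ]
    (d : ℕ) (X Y : Ω → ℝ) (Z : Ω → EuclideanSpace ℝ (Fin d))
    (hX : Measurable X) (hY : Measurable Y) (hZ : Measurable Z)
    (hX01 : ∀ ω, X ω ∈ Set.Ioc (0 : ℝ) 1) (hY01 : ∀ ω, Y ω ∈ Set.Ioc (0 : ℝ) 1)
    (k1 k2 : ℕ) (hk1 : 1 ≤ k1) (hk2 : 1 ≤ k2) :
    kCondIndep μ X Y Z k1 k2 ↔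
      ∀ l1 ≤ k1 - 1, ∀ j1 < 2 ^ l1, ∀ l2 ≤ k2 - 1, ∀ j2 < 2 ^ l2,
        (μ[fun ω => (dyad (l1 + 1) (2 * j1)).indicator (fun _ => (1 : ℝ)) (X ω) *
              (dyad (l2 + 1) (2 * j2)).indicator (fun _ => (1 : ℝ)) (Y ω) |
            MeasurableSpace.comap Z inferInstance] *
          μ[fun ω => (dyad (l1 + 1) (2 * j1 + 1)).indicator (fun _ => (1 : ℝ)) (X ω) *
              (dyad (l2 + 1) (2 * j2 + 1)).indicator (fun _ => (1 : ℝ)) (Y ω) |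
            MeasurableSpace.comap Z inferInstance])
        =ᵐ[μ]
        (μ[fun ω => (dyad (l1 + 1) (2 * j1)).indicator (fun _ => (1 : ℝ)) (X ω) *
              (dyad (l2 + 1) (2 * j2 + 1)).indicator (fun _ => (1 : ℝ)) (Y ω) |
            MeasurableSpace.comap Z inferInstance] *
          μ[fun ω => (dyad (l1 + 1) (2 * j1 + 1)).indicator (fun _ => (1 : ℝ)) (X ω) *
              (dyad (l2 + 1) (2 * j2)).indicator (fun _ => (1 : ℝ)) (Y ω) |
            MeasurableSpace.comap Z inferInstance]) := by
  classical
  have hmle : (MeasurableSpace.comap Z inferInstance : MeasurableSpace Ω) ≤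
      (inferInstance : MeasurableSpace Ω) := hZ.comap_le
  have hdy : ∀ l j : ℕ, MeasurableSet (dyad l j) := by
    intro l j; unfold dyad; exact measurableSet_Ioc
  have hA : ∀ l j : ℕ, MeasurableSet (X ⁻¹' dyad l j) := fun l j => hX (hdy l j)
  have hB : ∀ l j : ℕ, MeasurableSet (Y ⁻¹' dyad l j) := fun l j => hY (hdy l j)
  have hfg : ∀ l1 j1 l2 j2 : ℕ,
      (fun ω => (dyad l1 j1).indicator (fun _ => (1 : ℝ)) (X ω) *
        (dyad l2 j2).indicator (fun _ => (1 : ℝ)) (Y ω)) =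
      ind ((X ⁻¹' dyad l1 j1) ∩ (Y ⁻¹' dyad l2 j2)) := by
    intro l1 j1 l2 j2; funext ω
    by_cases h1 : X ω ∈ dyad l1 j1 <;> by_cases h2 : Y ω ∈ dyad l2 j2 <;>
      simp [ind, Set.indicator_apply, h1, h2]
  have hfo : ∀ l j : ℕ, (fun ω => (dyad l j).indicator (fun _ => (1 : ℝ)) (X ω)) =
      ind (X ⁻¹' dyad l j) := by
    intro l j; funext ω
    by_cases h1 : X ω ∈ dyad l j <;> simp [ind, Set.indicator_apply, h1]
  have hgo : ∀ l j : ℕ, (fun ω => (dyad l j).indicator (fun _ => (1 : ℝ)) (Y ω)) =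
      ind (Y ⁻¹' dyad l j) := by
    intro l j; funext ω
    by_cases h1 : Y ω ∈ dyad l j <;> simp [ind, Set.indicator_apply, h1]
  constructor
  · -- forward direction
    intro h l1 hl1 j1 hj1 l2 hl2 j2 hj2
    have c1 : 2 * j1 < 2 ^ (l1 + 1) := by rw [pow_succ]; omega
    have c2 : 2 * j1 + 1 < 2 ^ (l1 + 1) := by rw [pow_succ]; omega
    have c3 : 2 * j2 < 2 ^ (l2 + 1) := by rw [pow_succ]; omega
    have c4 : 2 * j2 + 1 < 2 ^ (l2 + 1) := by rw [pow_succ]; omega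
    have h00 := h (l1 + 1) (by omega) (l2 + 1) (by omega) (2 * j1) c1 (2 * j2) c3
    have h01 := h (l1 + 1) (by omega) (l2 + 1) (by omega) (2 * j1) c1 (2 * j2 + 1) c4
    have h10 := h (l1 + 1) (by omega) (l2 + 1) (by omega) (2 * j1 + 1) c2 (2 * j2) c3
    have h11 := h (l1 + 1) (by omega) (l2 + 1) (by omega) (2 * j1 + 1) c2 (2 * j2 + 1) c4
    filter_upwards [h00, h01, h10, h11] with ω e00 e01 e10 e11
    simp only [Pi.mul_apply] at e00 e01 e10 e11 ⊢
    rw [e00, e01, e10, e11]; ring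
  · -- backward direction
    intro h
    have hApre : ∀ l j : ℕ, X ⁻¹' dyad l j =
        (X ⁻¹' dyad (l + 1) (2 * j)) ∪ (X ⁻¹' dyad (l + 1) (2 * j + 1)) := by
      intro l j; rw [← Set.preimage_union, ← dyad_union]
    have hBpre : ∀ l j : ℕ, Y ⁻¹' dyad l j =
        (Y ⁻¹' dyad (l + 1) (2 * j)) ∪ (Y ⁻¹' dyad (l + 1) (2 * j + 1)) := by
      intro l j; rw [← Set.preimage_union, ← dyad_union]
    have hAdisj : ∀ l j : ℕ,
        Disjoint (X ⁻¹' dyad (l + 1) (2 * j)) (X ⁻¹' dyad (l + 1) (2 * j + 1)) :=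
      fun l j => (dyad_disjoint l j).preimage X
    have hBdisj : ∀ l j : ℕ,
        Disjoint (Y ⁻¹' dyad (l + 1) (2 * j)) (Y ⁻¹' dyad (l + 1) (2 * j + 1)) :=
      fun l j => (dyad_disjoint l j).preimage Y
    have hXuniv : X ⁻¹' dyad 0 0 = Set.univ := by
      ext ω
      simp only [Set.mem_preimage, Set.mem_univ, iff_true]
      rw [dyad_zero]
      exact hX01 ω
    have hYuniv : Y ⁻¹' dyad 0 0 = Set.univ := by
      ext ω
      simp only [Set.mem_preimage, Set.mem_univ, iff_true]
      rw [dyad_zero]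
      exact hY01 ω
    have hind_univ : ind (Set.univ : Set Ω) = fun _ => (1 : ℝ) := by
      funext ω; simp [ind]
    have main : ∀ n l1 l2 : ℕ, l1 + l2 ≤ n → l1 ≤ k1 → l2 ≤ k2 →
        ∀ j1 < 2 ^ l1, ∀ j2 < 2 ^ l2,
        μ[ind ((X ⁻¹' dyad l1 j1) ∩ (Y ⁻¹' dyad l2 j2))|MeasurableSpace.comap Z inferInstance]
          =ᵐ[μ]
        μ[ind (X ⁻¹' dyad l1 j1)|MeasurableSpace.comap Z inferInstance] *
          μ[ind (Y ⁻¹' dyad l2 j2)|MeasurableSpace.comap Z inferInstance] := by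
      intro n
      induction n with
      | zero =>
        intro l1 l2 hn hl1 hl2 j1 hj1 j2 hj2
        have hl10 : l1 = 0 := by omega
        have hl20 : l2 = 0 := by omega
        subst hl10; subst hl20
        have hj10 : j1 = 0 := by simpa using hj1
        have hj20 : j2 = 0 := by simpa using hj2
        subst hj10; subst hj20
        rw [hXuniv, hYuniv, Set.univ_inter, hind_univ, condExp_const hmle]
        filter_upwards with ω
        simp
      | succ n ih =>
        intro l1 l2 hn hl1 hl2 j1 hj1 j2 hj2
        cases l1 with
        | zero =>
          have hj10 : j1 = 0 := by simpa using hj1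
          subst hj10
          rw [hXuniv, Set.univ_inter, hind_univ, condExp_const hmle]
          filter_upwards with ω
          simp
        | succ l1' =>
          cases l2 with
          | zero =>
            have hj20 : j2 = 0 := by simpa using hj2
            subst hj20
            rw [hYuniv, Set.inter_univ, hind_univ, condExp_const hmle]
            filter_upwards with ω
            simp
          | succ l2' =>
            obtain ⟨p1, hp1⟩ := Nat.even_or_odd' j1
            obtain ⟨p2, hp2⟩ := Nat.even_or_odd' j2
            have hp1lt : p1 < 2 ^ l1' := by rw [pow_succ] at hj1; omega
            have hp2lt : p2 < 2 ^ l2' := by rw [pow_succ] at hj2; omega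
            have hw := h l1' (by omega) p1 hp1lt l2' (by omega) p2 hp2lt
            simp only [hfg] at hw
            have ihs := ih l1' l2' (by omega) (by omega) (by omega) p1 hp1lt p2 hp2lt
            rcases hp1 with hp1 | hp1 <;> rcases hp2 with hp2 | hp2 <;>
              subst hp1 <;> subst hp2
            · exact corner (hA _ _) (hA _ _) (hB _ _) (hB _ _)
                (hAdisj l1' p1) (hBdisj l2' p2) (hApre l1' p1) (hBpre l2' p2)
                hw ihs
                (ih (l1' + 1) l2' (by omega) (by omega) (by omega) (2 * p1) hj1 p2 hp2lt)
                (ih l1' (l2' + 1) (by omega) (by omega) (by omega) p1 hp1lt (2 * p2) hj2)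
            · exact corner (hA _ _) (hA _ _) (hB _ _) (hB _ _)
                (hAdisj l1' p1) (hBdisj l2' p2).symm (hApre l1' p1)
                ((hBpre l2' p2).trans (Set.union_comm _ _))
                hw.symm ihs
                (ih (l1' + 1) l2' (by omega) (by omega) (by omega) (2 * p1) hj1 p2 hp2lt)
                (ih l1' (l2' + 1) (by omega) (by omega) (by omega) p1 hp1lt (2 * p2 + 1) hj2)
            · exact corner (hA _ _) (hA _ _) (hB _ _) (hB _ _)
                (hAdisj l1' p1).symm (hBdisj l2' p2)
                ((hApre l1' p1).trans (Set.union_comm _ _)) (hBpre l2' p2)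
                (ae_mul_comm hw.symm) ihs
                (ih (l1' + 1) l2' (by omega) (by omega) (by omega) (2 * p1 + 1) hj1 p2 hp2lt)
                (ih l1' (l2' + 1) (by omega) (by omega) (by omega) p1 hp1lt (2 * p2) hj2)
            · exact corner (hA _ _) (hA _ _) (hB _ _) (hB _ _)
                (hAdisj l1' p1).symm (hBdisj l2' p2).symm
                ((hApre l1' p1).trans (Set.union_comm _ _))
                ((hBpre l2' p2).trans (Set.union_comm _ _))
                (ae_mul_comm hw) ihs
                (ih (l1' + 1) l2' (by omega) (by omega) (by omega) (2 * p1 + 1) hj1 p2 hp2lt)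
                (ih l1' (l2' + 1) (by omega) (by omega) (by omega) p1 hp1lt (2 * p2 + 1) hj2)
    intro l1 hl1 l2 hl2 j1 hj1 j2 hj2
    rw [hfg, hfo, hgo]
    exact main (k1 + k2) l1 l2 (by omega) hl1 hl2 j1 hj1 j2 hj2
end

section
/- Let ν be a probability measure on ℝ^d, p_min ∈ (0,1), L > 0, and let p : ℝ^d → [0,1]^{{0,1}×{0,1}} be a continuous map with Σ_{x,y} p(x,y|z) = 1 and min_{x,y} p(x,y|z) > p_min for all z, and such that |p_X(0|z) − p_X(0|z')| ∨ |p_Y(0|z) − p_Y(0|z')| ≤ L·‖z − z'‖ for all z, z', where p_X(0|z) = p(0,0|z) + p(0,1|z) and p_Y(0|z) = p(0,0|z) + p(1,0|z). Then there exist constants C > 0 and h₀ ∈ (0, p_min/L], depending only on L and p_min, with the following property: for every measurable S ⊆ ℝ^d with ν(S) > 0 whose closure is compact and connected and whose diameter h = sup_{z,z'∈S} ‖z − z'‖ satisfies h ≤ h₀, and for every z* in the closure of S with (1/ν(S))·∫_S p(0,0|z) dν(z) = p(0,0|z*), it holds that |θ_S − θ(z*)| ≤ C·h, where p̄(x,y)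 = (1/ν(S))·∫_S p(x,y|z) dν(z), θ_S = log[p̄(0,0)·p̄(1,1)/(p̄(0,1)·p̄(1,0))] is the marginal log odds ratio of the stratum S, and θ(z*) = log[p(0,0|z*)·p(1,1|z*)/(p(0,1|z*)·p(1,0|z*))] is the conditional log odds ratio at z*. -/
open MeasureTheory


lemma log_lip_aux {pmin u v : ℝ} (hp : 0 < pmin) (hu : pmin ≤ u) (hv : pmin ≤ v) :
    Real.log u - Real.log v ≤ |u - v| / pmin := by
  have hv0 : 0 < v := hp.trans_le hv
  have hu0 : 0 < u := hp.trans_le hu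
  rw [← Real.log_div hu0.ne' hv0.ne']
  have h1 : Real.log (u / v) ≤ u / v - 1 := Real.log_le_sub_one_of_pos (by positivity)
  have h2 : u / v - 1 = (u - v) / v := by field_simp
  have h3 : (u - v) / v ≤ |u - v| / pmin := by
    calc (u - v) / v ≤ |u - v| / v := by gcongr; exact le_abs_self _
    _ ≤ |u - v| / pmin := by gcongr
  linarith

lemma log_lip {pmin u v : ℝ} (hp : 0 < pmin) (hu : pmin ≤ u) (hv : pmin ≤ v) :
    |Real.log u - Real.log v| ≤ |u - v| / pmin := by
  rw [abs_sub_le_iff]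
  refine ⟨log_lip_aux hp hu hv, ?_⟩
  rw [abs_sub_comm]
  exact log_lip_aux hp hv hu

lemma avg_abs_le {d : ℕ} {ν : Measure (EuclideanSpace ℝ (Fin d))} [IsFiniteMeasure ν]
    {S : Set (EuclideanSpace ℝ (Fin d))} (hS : MeasurableSet S) (hpos : 0 < ν S)
    {f : EuclideanSpace ℝ (Fin d) → ℝ} (hf : IntegrableOn f S ν) {c B : ℝ}
    (hb : ∀ z ∈ S, |f z - c| ≤ B) :
    |(ν S).toReal⁻¹ * ∫ z in S, f z ∂ν - c| ≤ B := by
  have hfin : ν S ≠ ⊤ := measure_ne_top ν S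
  have hm : 0 < (ν S).toReal := ENNReal.toReal_pos hpos.ne' hfin
  have hconst : IntegrableOn (fun _ => c) S ν :=
    integrableOn_const hfin
  have hcint : ∫ _ in S, c ∂ν = (ν S).toReal * c := by
    rw [setIntegral_const, smul_eq_mul]; rfl
  have key : (ν S).toReal⁻¹ * ∫ z in S, f z ∂ν - c
      = (ν S).toReal⁻¹ * ∫ z in S, (f z - c) ∂ν := by
    rw [integral_sub hf hconst, hcint]
    field_simp
  rw [key, abs_mul, abs_of_nonneg (inv_nonneg.2 hm.le)]
  have h1 : |∫ z in S, (f z - c) ∂ν| ≤ ∫ z in S, |f z - c| ∂ν := by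
    simpa [Real.norm_eq_abs] using
      norm_integral_le_integral_norm (μ := ν.restrict S) (f := fun z => f z - c)
  have h2 : ∫ z in S, |f z - c| ∂ν ≤ ∫ _ in S, B ∂ν :=
    setIntegral_mono_on (hf.sub hconst).abs
      (integrableOn_const hfin) hS hb
  have h3 : ∫ _ in S, B ∂ν = (ν S).toReal * B := by
    rw [setIntegral_const, smul_eq_mul]; rfl
  calc (ν S).toReal⁻¹ * |∫ z in S, (f z - c) ∂ν|
      ≤ (ν S).toReal⁻¹ * ((ν S).toReal * B) := by
        apply mul_le_mul_of_nonneg_left _ (inv_nonneg.2 hm.le)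
        rw [← h3]; exact h1.trans h2
    _ = B := by field_simp

lemma avg_ge {d : ℕ} {ν : Measure (EuclideanSpace ℝ (Fin d))} [IsFiniteMeasure ν]
    {S : Set (EuclideanSpace ℝ (Fin d))} (hS : MeasurableSet S) (hpos : 0 < ν S)
    {f : EuclideanSpace ℝ (Fin d) → ℝ} (hf : IntegrableOn f S ν) {c : ℝ}
    (hb : ∀ z ∈ S, c ≤ f z) :
    c ≤ (ν S).toReal⁻¹ * ∫ z in S, f z ∂ν := by
  have hfin : ν S ≠ ⊤ := measure_ne_top ν S
  have hm : 0 < (ν S).toReal := ENNReal.toReal_pos hpos.ne' hfin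
  have h2 : ∫ _ in S, c ∂ν ≤ ∫ z in S, f z ∂ν :=
    setIntegral_mono_on (integrableOn_const hfin) hf hS hb
  rw [setIntegral_const, smul_eq_mul] at h2
  calc c = (ν S).toReal⁻¹ * ((ν S).toReal * c) := by field_simp
    _ ≤ (ν S).toReal⁻¹ * ∫ z in S, f z ∂ν := by
        apply mul_le_mul_of_nonneg_left h2 (inv_nonneg.2 hm.le)

/-- quantitative comparison of the marginal log odds ratio `θ_S` of a small
stratum `S` with the conditional log odds ratio `θ(z*)` at a mean-value point `z*`:
there are constants `C > 0` and `h₀ ∈ (0, p_min/L]` depending only on `L` and `p_min` such that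
for every admissible `ν`, `p`, every small stratum `S` (of diameter `h ≤ h₀`, positive measure,
compact connected closure), and every mean-value point `z*` for the `(0,0)` cell,
`|θ_S − θ(z*)| ≤ C · h`. -/
theorem marginal_vs_conditional_log_odds_ratio
    (d : ℕ) (L pmin : ℝ) (hL : 0 < L) (hpmin : pmin ∈ Set.Ioo (0 : ℝ) 1) :
    ∃ C > (0 : ℝ), ∃ h₀ ∈ Set.Ioc (0 : ℝ) (pmin / L),
      ∀ (ν : Measure (EuclideanSpace ℝ (Fin d))), IsProbabilityMeasure ν →
      ∀ p : EuclideanSpace ℝ (Fin d) → Fin 2 → Fin 2 → ℝ,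
        (∀ x y, Continuous fun z => p z x y) →
        (∀ z x y, p z x y ∈ Set.Icc (0 : ℝ) 1) →
        (∀ z, ∑ x, ∑ y, p z x y = 1) →
        (∀ z x y, pmin < p z x y) →
        (∀ z z',
          max |(p z 0 0 + p z 0 1) - (p z' 0 0 + p z' 0 1)|
              |(p z 0 0 + p z 1 0) - (p z' 0 0 + p z' 1 0)| ≤ L * dist z z') →
        ∀ S : Set (EuclideanSpace ℝ (Fin d)), MeasurableSet S → 0 < ν S →
          IsCompact (closure S) → IsConnected (closure S) →
          Metric.diam S ≤ h₀ →
          ∀ zstar ∈ closure S,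
            (ν S).toReal⁻¹ * ∫ z in S, p z 0 0 ∂ν = p zstar 0 0 →
            |Real.log
                (((ν S).toReal⁻¹ * ∫ z in S, p z 0 0 ∂ν) *
                    ((ν S).toReal⁻¹ * ∫ z in S, p z 1 1 ∂ν) /
                  (((ν S).toReal⁻¹ * ∫ z in S, p z 0 1 ∂ν) *
                    ((ν S).toReal⁻¹ * ∫ z in S, p z 1 0 ∂ν))) -
              Real.log (p zstar 0 0 * p zstar 1 1 / (p zstar 0 1 * p zstar 1 0))| ≤
            C * Metric.diam S := by
  have hp0 : 0 < pmin := hpmin.1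
  refine ⟨4 * L / pmin, by positivity, pmin / L, ⟨div_pos hp0 hL, le_refl _⟩, ?_⟩
  intro ν hν p hcont hIcc hsum hpm hlip S hSmeas hSpos hK hconn hdiam zstar hzstar hmean
  set h := Metric.diam S with hh
  have hh0 : 0 ≤ h := Metric.diam_nonneg
  have hint : ∀ x y, IntegrableOn (fun z => p z x y) S ν := by
    intro x y
    refine (Integrable.mono' (integrable_const 1) (hcont x y).aestronglyMeasurable
      ?_).integrableOn
    filter_upwards with z
    rw [Real.norm_eq_abs, abs_le]
    exact ⟨by linarith [(hIcc z x y).1], (hIcc z x y).2⟩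
  have hdistz : ∀ z ∈ S, dist z zstar ≤ h := by
    intro z hz
    have := Metric.dist_le_diam_of_mem hK.isBounded (subset_closure hz) hzstar
    rwa [Metric.diam_closure] at this
  set m := (ν S).toReal with hmdef
  have hm : 0 < m := ENNReal.toReal_pos hSpos.ne' (measure_ne_top ν S)
  set a := m⁻¹ * ∫ z in S, p z 0 0 ∂ν with hadef
  set b := m⁻¹ * ∫ z in S, p z 0 1 ∂ν with hbdef
  set c := m⁻¹ * ∫ z in S, p z 1 0 ∂ν with hcdef
  set e := m⁻¹ * ∫ z in S, p z 1 1 ∂ν with hedef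
  have ha : pmin ≤ a := avg_ge hSmeas hSpos (hint 0 0) (fun z _ => (hpm z 0 0).le)
  have hb : pmin ≤ b := avg_ge hSmeas hSpos (hint 0 1) (fun z _ => (hpm z 0 1).le)
  have hc : pmin ≤ c := avg_ge hSmeas hSpos (hint 1 0) (fun z _ => (hpm z 1 0).le)
  have he : pmin ≤ e := avg_ge hSmeas hSpos (hint 1 1) (fun z _ => (hpm z 1 1).le)
  -- marginal Lipschitz bounds
  have hbX : |a + b - (p zstar 0 0 + p zstar 0 1)| ≤ L * h := by
    have heq : a + b = m⁻¹ * ∫ z in S, (p z 0 0 + p z 0 1) ∂ν := by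
      rw [hadef, hbdef, integral_add (hint 0 0) (hint 0 1)]; ring
    rw [heq]
    exact avg_abs_le hSmeas hSpos ((hint 0 0).add (hint 0 1))
      (fun z hz => ((le_max_left _ _).trans (hlip z zstar)).trans
        (mul_le_mul_of_nonneg_left (hdistz z hz) hL.le))
  have hbY : |a + c - (p zstar 0 0 + p zstar 1 0)| ≤ L * h := by
    have heq : a + c = m⁻¹ * ∫ z in S, (p z 0 0 + p z 1 0) ∂ν := by
      rw [hadef, hcdef, integral_add (hint 0 0) (hint 1 0)]; ring
    rw [heq]
    exact avg_abs_le hSmeas hSpos ((hint 0 0).add (hint 1 0))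
      (fun z hz => ((le_max_right _ _).trans (hlip z zstar)).trans
        (mul_le_mul_of_nonneg_left (hdistz z hz) hL.le))
  have hone : ∀ z : EuclideanSpace ℝ (Fin d),
      p z 0 0 + p z 0 1 + p z 1 0 + p z 1 1 = 1 := by
    intro z
    have h1 := hsum z
    simp only [Fin.sum_univ_two] at h1
    linarith
  have hsumA : a + b + c + e = 1 := by
    have heq : a + b + c + e
        = m⁻¹ * ∫ z in S, (p z 0 0 + p z 0 1 + p z 1 0 + p z 1 1) ∂ν := by
      have g2 : IntegrableOn (fun z => p z 0 0 + p z 0 1) S ν := (hint 0 0).add (hint 0 1)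
      have g3 : IntegrableOn (fun z => p z 0 0 + p z 0 1 + p z 1 0) S ν := g2.add (hint 1 0)
      rw [hadef, hbdef, hcdef, hedef, integral_add g3 (hint 1 1), integral_add g2 (hint 1 0),
        integral_add (hint 0 0) (hint 0 1)]
      ring
    rw [heq]
    simp only [hone]
    rw [setIntegral_const, smul_eq_mul, mul_one]
    field_simp
    rfl
  -- componentwise bounds
  have habs01 : |b - p zstar 0 1| ≤ L * h := by
    have : a + b - (p zstar 0 0 + p zstar 0 1) = b - p zstar 0 1 := by
      rw [hmean]; ring
    rwa [this] at hbX
  have habs10 : |c - p zstar 1 0| ≤ L * h := by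
    have : a + c - (p zstar 0 0 + p zstar 1 0) = c - p zstar 1 0 := by
      rw [hmean]; ring
    rwa [this] at hbY
  have habs11 : |e - p zstar 1 1| ≤ 2 * (L * h) := by
    have hz1 := hone zstar
    have e1 : e - p zstar 1 1 = -(b - p zstar 0 1) - (c - p zstar 1 0) := by
      have := hmean
      linarith
    have l1 := abs_le.1 habs01
    have l2 := abs_le.1 habs10
    rw [abs_le, e1]
    constructor <;> linarith [l1.1, l1.2, l2.1, l2.2]
  -- log bounds
  have hlog01 : |Real.log b - Real.log (p zstar 0 1)| ≤ L * h / pmin :=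
    (log_lip hp0 hb (hpm zstar 0 1).le).trans (by gcongr)
  have hlog10 : |Real.log c - Real.log (p zstar 1 0)| ≤ L * h / pmin :=
    (log_lip hp0 hc (hpm zstar 1 0).le).trans (by gcongr)
  have hlog11 : |Real.log e - Real.log (p zstar 1 1)| ≤ 2 * (L * h) / pmin :=
    (log_lip hp0 he (hpm zstar 1 1).le).trans (by gcongr)
  have hloga : Real.log a = Real.log (p zstar 0 0) := by rw [hmean]
  -- positivity for log expansion
  have hapos : 0 < a := hp0.trans_le ha
  have hbpos : 0 < b := hp0.trans_le hb
  have hcpos : 0 < c := hp0.trans_le hc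
  have hepos : 0 < e := hp0.trans_le he
  have has : 0 < p zstar 0 0 := hp0.trans (hpm zstar 0 0)
  have hbs : 0 < p zstar 0 1 := hp0.trans (hpm zstar 0 1)
  have hcs : 0 < p zstar 1 0 := hp0.trans (hpm zstar 1 0)
  have hes : 0 < p zstar 1 1 := hp0.trans (hpm zstar 1 1)
  rw [Real.log_div (by positivity) (by positivity),
    Real.log_mul hapos.ne' hepos.ne', Real.log_mul hbpos.ne' hcpos.ne',
    Real.log_div (by positivity) (by positivity),
    Real.log_mul has.ne' hes.ne', Real.log_mul hbs.ne' hcs.ne']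
  have k1 := abs_le.1 hlog01
  have k2 := abs_le.1 hlog10
  have k3 := abs_le.1 hlog11
  have hCh : 4 * L / pmin * h = L * h / pmin + L * h / pmin + 2 * (L * h) / pmin := by
    ring
  rw [abs_le]
  constructor <;> [skip; skip] <;>
    · rw [hloga] at *
      linarith [k1.1, k1.2, k2.1, k2.2, k3.1, k3.2]
end

section
/- Let A', A, B be nonempty finite sets, φ : A' → A a function, p a pmf on A', and q a pmf on B. Let (U_1,V_1), …, (U_n,V_n) be i.i.d. pairs with U_i ∼ p and V_i ∼ q, U_i independent of V_i. Define the fine row counts R'(a') = #{i : U_i = a'} for a' ∈ A', the coarse row counts R(a) = #{i : φ(U_i) = a} for a ∈ A, the column counts C(b) = #{i : V_i = b} for b ∈ B, and the coarse table M(a,b) = #{i : φ(U_i) = a, V_i = b}. Then for every integer-valued array m on A×B and all margin values r', c with P(R' = r', C = c) > 0, P( M = m | R' = r', C = c ) = P( M = m | R = r, C = c ), where r(a) = Σ_{a' : φ(a') = a} r'(a'). In other words, conditionally on the column counts, the coarse contingency table depends on the row information only through the coarse row counts. -/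
open MeasureTheory
open scoped ENNReal

namespace CoarseAux

variable {n : ℕ}

lemma ncard_setOf (pr : Fin n → Prop) [DecidablePred pr] :
    {i | pr i}.ncard = (Finset.univ.filter pr).card := by
  rw [Set.ncard_eq_toFinset_card']
  simp [Set.toFinset_setOf]

lemma ncard_comp_perm (σ : Equiv.Perm (Fin n)) (pr : Fin n → Prop) :
    {i | pr (σ i)}.ncard = {i | pr i}.ncard := by
  classical
  rw [ncard_setOf, ncard_setOf]
  refine Finset.card_bij' (fun i _ => σ i) (fun j _ => σ.symm j) ?_ ?_ ?_ ?_ <;> simp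

lemma exists_perm_comp {A : Type*} (x y : Fin n → A)
    (h : ∀ a, {i | x i = a}.ncard = {i | y i = a}.ncard) :
    ∃ σ : Equiv.Perm (Fin n), ∀ i, y i = x (σ i) := by
  classical
  have hcard : ∀ a, Fintype.card {i // y i = a} = Fintype.card {i // x i = a} := by
    intro a
    rw [Fintype.card_subtype, Fintype.card_subtype]
    have := h a
    rw [ncard_setOf, ncard_setOf] at this
    omega
  let e : ∀ a, {i // y i = a} ≃ {i // x i = a} := fun a => Fintype.equivOfCardEq (hcard a)
  refine ⟨(Equiv.sigmaFiberEquiv y).symm.trans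
    ((Equiv.sigmaCongrRight e).trans (Equiv.sigmaFiberEquiv x)), fun i => ?_⟩
  exact ((e (y i)) ⟨i, rfl⟩).2.symm

open scoped Classical in
noncomputable def matchPerm {A : Type*} (x y : Fin n → A) : Equiv.Perm (Fin n) :=
  if h : ∃ σ : Equiv.Perm (Fin n), ∀ i, y i = x (σ i) then h.choose else 1

lemma matchPerm_spec {A : Type*} {x y : Fin n → A}
    (h : ∀ a, {i | x i = a}.ncard = {i | y i = a}.ncard) (i : Fin n) :
    y i = x (matchPerm x y i) := by
  have he := exists_perm_comp x y h
  rw [matchPerm, dif_pos he]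
  exact he.choose_spec i

variable {A' A B : Type*}

lemma coarse_ncard [Fintype A'] [DecidableEq A'] [DecidableEq A] (φ : A' → A)
    (ω : Fin n → A' × B) (a : A) :
    {i | φ (ω i).1 = a}.ncard
      = ∑ a' ∈ Finset.univ.filter (fun a' => φ a' = a), {i | (ω i).1 = a'}.ncard := by
  classical
  rw [ncard_setOf]
  rw [Finset.card_eq_sum_card_fiberwise
    (f := fun i => (ω i).1) (t := Finset.univ.filter fun a' => φ a' = a)
    (fun i hi => by simpa using (Finset.mem_filter.1 hi).2)]
  refine Finset.sum_congr rfl fun a' ha' => ?_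
  rw [ncard_setOf]
  congr 1
  ext i
  simp only [Finset.mem_filter, Finset.mem_univ, true_and] at ha' ⊢
  constructor
  · exact fun hi => hi.2
  · exact fun hi => ⟨by rw [hi, ha'], hi⟩

/-- the pair-swapping map exchanging fine labels between two samples with equal
coarse row patterns (up to permutation). -/
noncomputable def Tmap (φ : A' → A) (z : (Fin n → A' × B) × (Fin n → A' × B)) :
    (Fin n → A' × B) × (Fin n → A' × B) :=
  (fun i => ((z.2 ((matchPerm (fun j => φ (z.1 j).1) (fun j => φ (z.2 j).1)).symm i)).1,
      (z.1 i).2),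
   fun i => ((z.1 (matchPerm (fun j => φ (z.1 j).1) (fun j => φ (z.2 j).1) i)).1, (z.2 i).2))

variable (φ : A' → A) (ω ω' : Fin n → A' × B)

lemma Tmap_fst_snd (i : Fin n) : ((Tmap φ (ω, ω')).1 i).2 = (ω i).2 := rfl

lemma Tmap_snd_snd (i : Fin n) : ((Tmap φ (ω, ω')).2 i).2 = (ω' i).2 := rfl

lemma Tmap_fine_fst (u : A') :
    {i | ((Tmap φ (ω, ω')).1 i).1 = u}.ncard = {i | (ω' i).1 = u}.ncard :=
  ncard_comp_perm _ (fun j => (ω' j).1 = u)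

lemma Tmap_fine_snd (u : A') :
    {i | ((Tmap φ (ω, ω')).2 i).1 = u}.ncard = {i | (ω i).1 = u}.ncard :=
  ncard_comp_perm _ (fun j => (ω j).1 = u)

variable {φ ω ω'}

lemma Tmap_coarse_fst
    (hcc : ∀ a, {i | φ (ω i).1 = a}.ncard = {i | φ (ω' i).1 = a}.ncard) (i : Fin n) :
    φ ((Tmap φ (ω, ω')).1 i).1 = φ (ω i).1 := by
  have hσ := matchPerm_spec (x := fun j => φ (ω j).1) (y := fun j => φ (ω' j).1) hcc
  have h := hσ ((matchPerm (fun j => φ (ω j).1) (fun j => φ (ω' j).1)).symm i)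
  rw [Equiv.apply_symm_apply] at h
  exact h

lemma Tmap_coarse_snd
    (hcc : ∀ a, {i | φ (ω i).1 = a}.ncard = {i | φ (ω' i).1 = a}.ncard) (i : Fin n) :
    φ ((Tmap φ (ω, ω')).2 i).1 = φ (ω' i).1 := by
  have hσ := matchPerm_spec (x := fun j => φ (ω j).1) (y := fun j => φ (ω' j).1) hcc
  exact (hσ i).symm

lemma Tmap_invol
    (hcc : ∀ a, {i | φ (ω i).1 = a}.ncard = {i | φ (ω' i).1 = a}.ncard) :
    Tmap φ (Tmap φ (ω, ω')) = (ω, ω') := by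
  have hpa : (fun j => φ ((Tmap φ (ω, ω')).1 j).1) = fun j => φ (ω j).1 :=
    funext (Tmap_coarse_fst hcc)
  have hpb : (fun j => φ ((Tmap φ (ω, ω')).2 j).1) = fun j => φ (ω' j).1 :=
    funext (Tmap_coarse_snd hcc)
  have key : matchPerm (fun j => φ ((Tmap φ (ω, ω')).1 j).1)
      (fun j => φ ((Tmap φ (ω, ω')).2 j).1)
      = matchPerm (fun j => φ (ω j).1) (fun j => φ (ω' j).1) := by
    rw [hpa, hpb]
  set σ := matchPerm (fun j => φ (ω j).1) (fun j => φ (ω' j).1) with hσdef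
  refine Prod.ext ?_ ?_
  · funext i
    show ((((Tmap φ (ω, ω')).2)
      ((matchPerm (fun j => φ ((Tmap φ (ω, ω')).1 j).1)
        (fun j => φ ((Tmap φ (ω, ω')).2 j).1)).symm i)).1,
      (((Tmap φ (ω, ω')).1) i).2) = ω i
    rw [key]
    show ((ω (σ (σ.symm i))).1, (ω i).2) = ω i
    rw [Equiv.apply_symm_apply]
  · funext i
    show ((((Tmap φ (ω, ω')).1)
      (matchPerm (fun j => φ ((Tmap φ (ω, ω')).1 j).1)
        (fun j => φ ((Tmap φ (ω, ω')).2 j).1) i)).1,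
      (((Tmap φ (ω, ω')).2) i).2) = ω' i
    rw [key]
    show ((ω' (σ.symm (σ i))).1, (ω' i).2) = ω' i
    rw [Equiv.symm_apply_apply]

lemma Tmap_weight (f : A' → ℝ≥0∞) (g : B → ℝ≥0∞) :
    ((∏ i, f (((Tmap φ (ω, ω')).1 i).1)) * ∏ i, g (((Tmap φ (ω, ω')).1 i).2)) *
      ((∏ i, f (((Tmap φ (ω, ω')).2 i).1)) * ∏ i, g (((Tmap φ (ω, ω')).2 i).2))
      = ((∏ i, f ((ω i).1)) * ∏ i, g ((ω i).2)) *
        ((∏ i, f ((ω' i).1)) * ∏ i, g ((ω' i).2)) := by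
  set σ := matchPerm (fun j => φ (ω j).1) (fun j => φ (ω' j).1) with hσdef
  have h1 : (∏ i, f (((Tmap φ (ω, ω')).1 i).1)) = ∏ i, f ((ω' i).1) :=
    Equiv.prod_comp σ.symm (fun j => f ((ω' j).1))
  have h2 : (∏ i, f (((Tmap φ (ω, ω')).2 i).1)) = ∏ i, f ((ω i).1) :=
    Equiv.prod_comp σ (fun j => f ((ω j).1))
  have h3 : (∏ i, g (((Tmap φ (ω, ω')).1 i).2)) = ∏ i, g ((ω i).2) := rfl
  have h4 : (∏ i, g (((Tmap φ (ω, ω')).2 i).2)) = ∏ i, g ((ω' i).2) := rfl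
  rw [h1, h2, h3, h4]
  ring

lemma measure_eq_sum_singleton {Ω : Type*} [Fintype Ω] [MeasurableSpace Ω]
    [MeasurableSingletonClass Ω] (μ : Measure Ω) (S : Set Ω) :
    μ S = ∑ ω ∈ S.toFinite.toFinset, μ {ω} := by
  classical
  have hS : S = ⋃ ω ∈ S.toFinite.toFinset, ({ω} : Set Ω) := by
    ext a
    simp only [Set.mem_iUnion, Set.mem_singleton_iff, Set.Finite.mem_toFinset]
    exact ⟨fun h => ⟨a, h, rfl⟩, fun ⟨b, hb, hab⟩ => hab ▸ hb⟩
  conv_lhs => rw [hS]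
  refine measure_biUnion_finset ?_ ?_
  · intro a _ b _ hab
    simp [Function.onFun, Set.disjoint_singleton, hab]
  · exact fun b _ => measurableSet_singleton b

lemma pi_singleton_eq {ι : Type*} [Fintype ι] {X : ι → Type*} [∀ i, MeasurableSpace (X i)]
    (P : ∀ i, Measure (X i)) [∀ i, IsProbabilityMeasure (P i)] (ω : ∀ i, X i) :
    Measure.pi P {ω} = ∏ i, P i {ω i} := by
  rw [← Set.univ_pi_singleton ω, Measure.pi_pi]

lemma cond_eq_cond {Ω : Type*} [MeasurableSpace Ω] (μ : Measure Ω) [IsProbabilityMeasure μ]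
    (E1 E2 F : Set Ω) (hE1 : MeasurableSet E1) (hE2 : MeasurableSet E2)
    (h1 : μ E1 ≠ 0) (h2 : μ E2 ≠ 0)
    (key : μ E2 * μ (E1 ∩ F) = μ E1 * μ (E2 ∩ F)) :
    ProbabilityTheory.cond μ E1 F = ProbabilityTheory.cond μ E2 F := by
  rw [ProbabilityTheory.cond_apply hE1, ProbabilityTheory.cond_apply hE2,
    mul_comm ((μ E1)⁻¹) _, mul_comm ((μ E2)⁻¹) _, ← div_eq_mul_inv, ← div_eq_mul_inv,
    ENNReal.div_eq_div_iff h2 (measure_ne_top μ E2) h1 (measure_ne_top μ E1)]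
  exact key

end CoarseAux

/-- for i.i.d. pairs `(U_i, V_i)` with `U_i ∼ p` on `A'`, `V_i ∼ q` on `B`
independent, and a coarsening map `φ : A' → A`, conditionally on the column counts the coarse
contingency table `M(a,b) = #{i : φ(U_i) = a, V_i = b}` depends on the row information only
through the coarse row counts: `P(M = m | R' = r', C = c) = P(M = m | R = r, C = c)`, where
`r(a) = Σ_{a' : φ(a') = a} r'(a')`. -/
theorem coarse_table_conditional_margin_sufficiency
    {A' A B : Type*} [Fintype A'] [Fintype A] [Fintype B]
    [Nonempty A'] [Nonempty A] [Nonempty B] [DecidableEq A]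
    [MeasurableSpace A'] [MeasurableSingletonClass A']
    [MeasurableSpace B] [MeasurableSingletonClass B]
    (φ : A' → A) (p : A' → ℝ) (q : B → ℝ)
    (hp0 : ∀ u, 0 ≤ p u) (hq0 : ∀ v, 0 ≤ q v)
    (hp1 : ∑ u, p u = 1) (hq1 : ∑ v, q v = 1)
    (P : Measure (A' × B)) [IsProbabilityMeasure P]
    (hP : ∀ u v, P {(u, v)} = ENNReal.ofReal (p u * q v))
    (n : ℕ) (m : A → B → ℕ) (r' : A' → ℕ) (c : B → ℕ)
    (hpos : (Measure.pi fun _ : Fin n => P)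
      {ω | (∀ u, {i : Fin n | (ω i).1 = u}.ncard = r' u) ∧
           ∀ v, {i : Fin n | (ω i).2 = v}.ncard = c v} ≠ 0) :
    ProbabilityTheory.cond (Measure.pi fun _ : Fin n => P)
        {ω | (∀ u, {i : Fin n | (ω i).1 = u}.ncard = r' u) ∧
             ∀ v, {i : Fin n | (ω i).2 = v}.ncard = c v}
        {ω | ∀ x y, {i : Fin n | φ (ω i).1 = x ∧ (ω i).2 = y}.ncard = m x y} =
      ProbabilityTheory.cond (Measure.pi fun _ : Fin n => P)
        {ω | (∀ x, {i : Fin n | φ (ω i).1 = x}.ncard = ∑ u ∈ Finset.univ.filter (fun u => φ u = x), r' u) ∧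
             ∀ v, {i : Fin n | (ω i).2 = v}.ncard = c v}
        {ω | ∀ x y, {i : Fin n | φ (ω i).1 = x ∧ (ω i).2 = y}.ncard = m x y} := by
  classical
  set μ : Measure (Fin n → A' × B) := Measure.pi fun _ : Fin n => P with hμ
  haveI hprob : IsProbabilityMeasure μ := by rw [hμ]; infer_instance
  set F : Set (Fin n → A' × B) :=
    {ω | ∀ x y, {i : Fin n | φ (ω i).1 = x ∧ (ω i).2 = y}.ncard = m x y} with hFdef
  set E1 : Set (Fin n → A' × B) :=
    {ω | (∀ u, {i : Fin n | (ω i).1 = u}.ncard = r' u) ∧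
         ∀ v, {i : Fin n | (ω i).2 = v}.ncard = c v} with hE1def
  set E2 : Set (Fin n → A' × B) :=
    {ω | (∀ x, {i : Fin n | φ (ω i).1 = x}.ncard
            = ∑ u ∈ Finset.univ.filter (fun u => φ u = x), r' u) ∧
         ∀ v, {i : Fin n | (ω i).2 = v}.ncard = c v} with hE2def
  -- E1 ⊆ E2
  have hsub : E1 ⊆ E2 := by
    intro ω hω
    refine ⟨fun x => ?_, hω.2⟩
    rw [CoarseAux.coarse_ncard φ ω x]
    exact Finset.sum_congr rfl fun a' _ => hω.1 a'
  have h1 : μ E1 ≠ 0 := hpos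
  have h2 : μ E2 ≠ 0 := fun h => hpos (le_antisymm ((measure_mono hsub).trans h.le) zero_le)
  -- weights
  have hw : ∀ ω : Fin n → A' × B,
      μ {ω} = (∏ i, ENNReal.ofReal (p (ω i).1)) * ∏ i, ENNReal.ofReal (q (ω i).2) := by
    intro ω
    rw [hμ, CoarseAux.pi_singleton_eq, ← Finset.prod_mul_distrib]
    refine Finset.prod_congr rfl fun i _ => ?_
    have h : ({ω i} : Set (A' × B)) = {((ω i).1, (ω i).2)} := by rw [Prod.mk.eta]
    rw [h, hP, ENNReal.ofReal_mul (hp0 _)]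
  refine CoarseAux.cond_eq_cond μ E1 E2 F (Set.toFinite _).measurableSet
    (Set.toFinite _).measurableSet h1 h2 ?_
  -- key measure identity
  -- membership facts along the swap map
  have hT : ∀ ω ω' : Fin n → A' × B, ω ∈ E2 → ω' ∈ E2 → ω ∈ F →
      (CoarseAux.Tmap φ (ω, ω')).1 ∈ E2 ∧ (CoarseAux.Tmap φ (ω, ω')).1 ∈ F ∧
      (ω' ∈ E1 → (CoarseAux.Tmap φ (ω, ω')).1 ∈ E1) ∧
      (ω ∈ E1 → (CoarseAux.Tmap φ (ω, ω')).2 ∈ E1) ∧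
      (CoarseAux.Tmap φ (ω, ω')).2 ∈ E2 := by
    intro ω ω' h h' hF'
    have hcc : ∀ a, {i | φ (ω i).1 = a}.ncard = {i | φ (ω' i).1 = a}.ncard :=
      fun a => (h.1 a).trans (h'.1 a).symm
    have pa := CoarseAux.Tmap_coarse_fst hcc
    have pc := CoarseAux.Tmap_coarse_snd hcc
    refine ⟨⟨fun x => ?_, fun v => h.2 v⟩, fun x y => ?_, fun h1' => ?_, fun h1' => ?_,
      ⟨fun x => ?_, fun v => h'.2 v⟩⟩
    · have hs : {i : Fin n | φ ((CoarseAux.Tmap φ (ω, ω')).1 i).1 = x}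
          = {i : Fin n | φ (ω i).1 = x} := by
        ext i
        simp only [Set.mem_setOf_eq]
        rw [pa i]
      rw [hs]
      exact h.1 x
    · have hs : {i : Fin n | φ ((CoarseAux.Tmap φ (ω, ω')).1 i).1 = x
            ∧ ((CoarseAux.Tmap φ (ω, ω')).1 i).2 = y}
          = {i : Fin n | φ (ω i).1 = x ∧ (ω i).2 = y} := by
        ext i
        simp only [Set.mem_setOf_eq]
        rw [pa i]
        exact Iff.rfl
      rw [hs]
      exact hF' x y
    · exact ⟨fun u => (CoarseAux.Tmap_fine_fst φ ω ω' u).trans (h1'.1 u), fun v => h.2 v⟩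
    · exact ⟨fun u => (CoarseAux.Tmap_fine_snd φ ω ω' u).trans (h1'.1 u), fun v => h'.2 v⟩
    · have hs : {i : Fin n | φ ((CoarseAux.Tmap φ (ω, ω')).2 i).1 = x}
          = {i : Fin n | φ (ω' i).1 = x} := by
        ext i
        simp only [Set.mem_setOf_eq]
        rw [pc i]
      rw [hs]
      exact h'.1 x
  rw [mul_comm (μ E2) _, mul_comm (μ E1) _,
    CoarseAux.measure_eq_sum_singleton μ E2, CoarseAux.measure_eq_sum_singleton μ (E1 ∩ F),
    CoarseAux.measure_eq_sum_singleton μ E1, CoarseAux.measure_eq_sum_singleton μ (E2 ∩ F),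
    Finset.sum_mul_sum, Finset.sum_mul_sum, ← Finset.sum_product', ← Finset.sum_product']
  refine Finset.sum_nbij' (CoarseAux.Tmap φ) (CoarseAux.Tmap φ) ?_ ?_ ?_ ?_ ?_
  · rintro ⟨ω, ω'⟩ hz
    rw [Finset.mem_product, Set.Finite.mem_toFinset, Set.Finite.mem_toFinset] at hz
    obtain ⟨⟨hω1, hωF⟩, hω'2⟩ := hz
    obtain ⟨hA, hB, _, hD, _⟩ := hT ω ω' (hsub hω1) hω'2 hωF
    rw [Finset.mem_product, Set.Finite.mem_toFinset, Set.Finite.mem_toFinset]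
    exact ⟨⟨hA, hB⟩, hD hω1⟩
  · rintro ⟨ω, ω'⟩ hz
    rw [Finset.mem_product, Set.Finite.mem_toFinset, Set.Finite.mem_toFinset] at hz
    obtain ⟨⟨hω2, hωF⟩, hω'1⟩ := hz
    obtain ⟨_, hB, hC, _, hE⟩ := hT ω ω' hω2 (hsub hω'1) hωF
    rw [Finset.mem_product, Set.Finite.mem_toFinset, Set.Finite.mem_toFinset]
    exact ⟨⟨hC hω'1, hB⟩, hE⟩
  · rintro ⟨ω, ω'⟩ hz
    rw [Finset.mem_product, Set.Finite.mem_toFinset, Set.Finite.mem_toFinset] at hz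
    obtain ⟨⟨hω1, _⟩, hω'2⟩ := hz
    exact CoarseAux.Tmap_invol (fun a => ((hsub hω1).1 a).trans ((hω'2.1 a)).symm)
  · rintro ⟨ω, ω'⟩ hz
    rw [Finset.mem_product, Set.Finite.mem_toFinset, Set.Finite.mem_toFinset] at hz
    obtain ⟨⟨hω2, _⟩, hω'1⟩ := hz
    exact CoarseAux.Tmap_invol (fun a => (hω2.1 a).trans (((hsub hω'1).1 a)).symm)
  · rintro ⟨ω, ω'⟩ _
    rw [hw, hw, hw, hw]
    exact (CoarseAux.Tmap_weight (fun u => ENNReal.ofReal (p u))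
      (fun v => ENNReal.ofReal (q v))).symm
end
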